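/- Let {M_i}_{i∈ℤ} ⊆ ℝ^{l×m}, {N_i}_{i∈ℤ} ⊆ ℝ^{l×n}. Then M_iᵀ N_j depends only on i − j (i.e., M_iᵀ N_j = M_{i+k}ᵀ N_{j+k} for all i,j,k ∈ ℤ) if and only if there exist an integer l', matrices P ∈ ℝ^{l'×m}, Q ∈ ℝ^{l'×n}, and an invertible matrix A ∈ ℝ^{l'×l'} such that M_iᵀ N_j = ((A^{-i})ᵀ P)ᵀ (A^j Q) for all i, j ∈ ℤ. -/

import Mathlib

open Matrix

namespace Stmt9Aux

variable {l m n : ℕ}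

/-- The map sending `u : ℝ^l` to the function `i ↦ (M (-i))ᵀ *ᵥ u`. -/
noncomputable def psi (M : ℤ → Matrix (Fin l) (Fin m) ℝ) :
    (Fin l → ℝ) →ₗ[ℝ] (ℤ → Fin m → ℝ) :=
  LinearMap.pi fun i => ((M (-i))ᵀ).mulVecLin

@[simp] lemma psi_apply (M : ℤ → Matrix (Fin l) (Fin m) ℝ) (u : Fin l → ℝ) (i : ℤ) :
    psi M u i = (M (-i))ᵀ *ᵥ u := rfl

/-- Generators. -/
def S (M : ℤ → Matrix (Fin l) (Fin m) ℝ) (N : ℤ → Matrix (Fin l) (Fin n) ℝ) :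
    Set (ℤ → Fin m → ℝ) :=
  {g | ∃ (j : ℤ) (v : Fin n → ℝ), g = psi M (N j *ᵥ v)}

/-- The span of all the generators. -/
noncomputable def W (M : ℤ → Matrix (Fin l) (Fin m) ℝ)
    (N : ℤ → Matrix (Fin l) (Fin n) ℝ) : Submodule ℝ (ℤ → Fin m → ℝ) :=
  Submodule.span ℝ (S M N)

lemma W_le_range (M : ℤ → Matrix (Fin l) (Fin m) ℝ) (N : ℤ → Matrix (Fin l) (Fin n) ℝ) :
    W M N ≤ LinearMap.range (psi M) := by
  rw [W, Submodule.span_le]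
  rintro g ⟨j, v, rfl⟩
  exact ⟨N j *ᵥ v, rfl⟩

instance (M : ℤ → Matrix (Fin l) (Fin m) ℝ) (N : ℤ → Matrix (Fin l) (Fin n) ℝ) :
    FiniteDimensional ℝ (W M N) :=
  Submodule.finiteDimensional_of_le (W_le_range M N)

/-- The shift operator `g ↦ (i ↦ g (i+1))`. -/
noncomputable def sh : (ℤ → Fin m → ℝ) ≃ₗ[ℝ] (ℤ → Fin m → ℝ) :=
  LinearEquiv.funCongrLeft ℝ (Fin m → ℝ) (Equiv.addRight (1 : ℤ))

@[simp] lemma sh_apply (g : ℤ → Fin m → ℝ) (i : ℤ) : (sh g) i = g (i + 1) := rfl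

variable {M : ℤ → Matrix (Fin l) (Fin m) ℝ} {N : ℤ → Matrix (Fin l) (Fin n) ℝ}
variable (h : ∀ i j k : ℤ, (M i)ᵀ * N j = (M (i + k))ᵀ * N (j + k))

include h

lemma key (i j d : ℤ) : (M i)ᵀ * N j = (M (i + d))ᵀ * N (j + d) := h i j d

lemma sh_gen (j : ℤ) (v : Fin n → ℝ) :
    sh (psi M (N j *ᵥ v)) = psi M (N (j + 1) *ᵥ v) := by
  funext i
  have hk : (M (-(i + 1)))ᵀ * N j = (M (-i))ᵀ * N (j + 1) := by
    have := h (-(i + 1)) j 1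
    simpa using this
  simp only [sh_apply, psi_apply, mulVec_mulVec, hk]

lemma sh_gen_symm (j : ℤ) (v : Fin n → ℝ) :
    sh.symm (psi M (N j *ᵥ v)) = psi M (N (j - 1) *ᵥ v) := by
  apply sh.injective
  rw [LinearEquiv.apply_symm_apply, sh_gen h, sub_add_cancel]

lemma map_sh : (W M N).map ((sh : (ℤ → Fin m → ℝ) ≃ₗ[ℝ] (ℤ → Fin m → ℝ)) :
    (ℤ → Fin m → ℝ) →ₗ[ℝ] (ℤ → Fin m → ℝ)) = W M N := by
  rw [W, Submodule.map_span]
  congr 1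
  apply Set.Subset.antisymm
  · rintro g ⟨g', ⟨j, v, rfl⟩, rfl⟩
    exact ⟨j + 1, v, sh_gen h j v⟩
  · rintro g ⟨j, v, rfl⟩
    refine ⟨psi M (N (j - 1) *ᵥ v), ⟨j - 1, v, rfl⟩, ?_⟩
    show sh (psi M (N (j - 1) *ᵥ v)) = psi M (N j *ᵥ v)
    rw [sh_gen h, sub_add_cancel]

/-- The shift restricted to an automorphism of `W`. -/
noncomputable def T : W M N ≃ₗ[ℝ] W M N :=
  LinearEquiv.ofSubmodules (sh : (ℤ → Fin m → ℝ) ≃ₗ[ℝ] (ℤ → Fin m → ℝ)) (W M N) (W M N)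
    (map_sh h)

lemma T_apply (x : W M N) : ((T h x : W M N) : ℤ → Fin m → ℝ) = sh (x : ℤ → Fin m → ℝ) := by
  simp [T, LinearEquiv.ofSubmodules]

lemma T_symm_apply (x : W M N) :
    (((T h).symm x : W M N) : ℤ → Fin m → ℝ) = sh.symm (x : ℤ → Fin m → ℝ) := by
  apply sh.injective
  rw [LinearEquiv.apply_symm_apply, ← T_apply h, LinearEquiv.apply_symm_apply]

lemma T_zpow_apply (d : ℤ) : ∀ (x : W M N) (i : ℤ),
    ((((T h) ^ d) x : W M N) : ℤ → Fin m → ℝ) i = (x : ℤ → Fin m → ℝ) (i + d) := by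
  induction d using Int.induction_on with
  | zero => simp
  | succ d ih =>
    intro x i
    have : (T h) ^ ((d : ℤ) + 1) = (T h) ^ (d : ℤ) * T h := zpow_add_one (T h) d
    rw [this]
    have happ : (((T h) ^ (d : ℤ) * T h) x) = ((T h) ^ (d : ℤ)) (T h x) := rfl
    rw [happ, ih (T h x) i]
    have := congrFun (T_apply h x) (i + d)
    rw [this]
    simp [add_assoc, add_comm (1 : ℤ) (d : ℤ)]
  | pred d ih =>
    intro x i
    have : (T h) ^ (-(d : ℤ) - 1) = (T h) ^ (-(d : ℤ)) * (T h)⁻¹ := zpow_sub_one (T h) _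
    rw [this]
    have happ : (((T h) ^ (-(d : ℤ)) * (T h)⁻¹) x) = ((T h) ^ (-(d : ℤ))) ((T h)⁻¹ x) := rfl
    rw [happ, ih ((T h)⁻¹ x) i]
    have hinv : ((T h)⁻¹ x) = (T h).symm x := rfl
    rw [hinv]
    have := congrFun (T_symm_apply h x) (i + -(d : ℤ))
    rw [this]
    have : sh.symm ((x : ℤ → Fin m → ℝ)) (i + -(d : ℤ)) = (x : ℤ → Fin m → ℝ) (i + -(d : ℤ) - 1) := by
      have := congrFun (congrArg sh.symm (rfl : (x : ℤ → Fin m → ℝ) = x)) 0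
      show (x : ℤ → Fin m → ℝ) ((Equiv.addRight (1:ℤ)).symm (i + -(d:ℤ))) = _
      simp [Equiv.addRight]
      ring_nf
    rw [this]
    ring_nf

end Stmt9Aux

open Stmt9Aux in
theorem stmt9 {l m n : ℕ}
    (M : ℤ → Matrix (Fin l) (Fin m) ℝ) (N : ℤ → Matrix (Fin l) (Fin n) ℝ) :
    (∀ i j k : ℤ, (M i)ᵀ * N j = (M (i + k))ᵀ * N (j + k)) ↔
      ∃ (l' : ℕ) (P : Matrix (Fin l') (Fin m) ℝ) (Q : Matrix (Fin l') (Fin n) ℝ)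
        (A : Matrix (Fin l') (Fin l') ℝ), IsUnit A.det ∧
        ∀ i j : ℤ, (M i)ᵀ * N j = ((A ^ (-i))ᵀ * P)ᵀ * (A ^ j * Q) := by
  constructor
  · intro h
    classical
    set l' := Module.finrank ℝ (W M N) with hl'
    set B : Module.Basis (Fin l') ℝ (W M N) := Module.finBasis ℝ (W M N) with hB
    set A : Matrix (Fin l') (Fin l') ℝ :=
      LinearMap.toMatrix B B ((T h : W M N ≃ₗ[ℝ] W M N) : (W M N) →ₗ[ℝ] (W M N)) with hA
    have hAdet : IsUnit A.det := LinearEquiv.isUnit_det (T h) B B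
    -- A ^ d = toMatrix of (T h) ^ d for every integer d
    have hpow_nat : ∀ d : ℕ, A ^ d =
        LinearMap.toMatrix B B (((T h) ^ (d : ℤ) : W M N ≃ₗ[ℝ] W M N) : (W M N) →ₗ[ℝ] (W M N)) := by
      intro d
      induction d with
      | zero => simp [LinearMap.toMatrix_one]
      | succ d ih =>
        have hz : (T h) ^ ((d : ℤ) + 1) = (T h) ^ (d : ℤ) * T h := zpow_add_one (T h) d
        have hc : ((((T h) ^ (d : ℤ) * T h) : W M N ≃ₗ[ℝ] W M N) : (W M N) →ₗ[ℝ] (W M N))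
            = (((T h) ^ (d : ℤ) : W M N ≃ₗ[ℝ] W M N) : (W M N) →ₗ[ℝ] (W M N)) *
              ((T h : W M N ≃ₗ[ℝ] W M N) : (W M N) →ₗ[ℝ] (W M N)) := rfl
        rw [pow_succ, ih, Int.natCast_add_one, hz, hc, LinearMap.toMatrix_mul]
    have hpow : ∀ d : ℤ, A ^ d =
        LinearMap.toMatrix B B (((T h) ^ d : W M N ≃ₗ[ℝ] W M N) : (W M N) →ₗ[ℝ] (W M N)) := by
      intro d
      rcases d with d | d
      · rw [Int.ofNat_eq_coe, zpow_natCast, hpow_nat d]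
      · rw [Int.negSucc_eq, ← Int.natCast_add_one]
        rw [Matrix.zpow_neg hAdet, zpow_natCast, hpow_nat (d+1)]
        apply Matrix.inv_eq_left_inv
        have hz : ((T h) ^ (-(((d+1:ℕ)):ℤ))) * ((T h) ^ (((d+1:ℕ)):ℤ)) = 1 := by
          rw [← _root_.zpow_add, neg_add_cancel, zpow_zero]
        have hm := congrArg (fun (f : W M N ≃ₗ[ℝ] W M N) =>
          LinearMap.toMatrix B B (f : (W M N) →ₗ[ℝ] (W M N))) hz
        simp only [LinearEquiv.coe_toLinearMap_mul, LinearMap.toMatrix_mul,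
          LinearEquiv.coe_toLinearMap_one, LinearMap.toMatrix_one, LinearMap.toMatrix_id] at hm
        exact hm
    -- the elements q b of W
    have memW : ∀ (b : Fin n), psi M (N 0 *ᵥ Pi.single b 1) ∈ W M N :=
      fun b => Submodule.subset_span ⟨0, Pi.single b 1, rfl⟩
    set q : Fin n → W M N := fun b => ⟨psi M (N 0 *ᵥ Pi.single b 1), memW b⟩ with hq
    set Q : Matrix (Fin l') (Fin n) ℝ := Matrix.of fun r b => B.repr (q b) r with hQ
    set P : Matrix (Fin l') (Fin m) ℝ :=
      Matrix.of fun r a => ((B r : W M N) : ℤ → Fin m → ℝ) 0 a with hP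
    refine ⟨l', P, Q, A, hAdet, ?_⟩
    intro i j
    -- reduce RHS
    have hrhs : ((A ^ (-i))ᵀ * P)ᵀ * (A ^ j * Q) = Pᵀ * (A ^ (-i + j) * Q) := by
      rw [Matrix.transpose_mul, Matrix.transpose_transpose, Matrix.zpow_add hAdet,
        Matrix.mul_assoc, Matrix.mul_assoc]
    rw [hrhs]
    -- reduce LHS
    have hlhs : (M i)ᵀ * N j = (M 0)ᵀ * N (j - i) := by
      have := h i j (-i)
      simpa [sub_eq_add_neg] using this
    rw [hlhs]
    set d : ℤ := -i + j with hd
    have hd' : j - i = d := by rw [hd]; ring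
    rw [hd']
    -- entrywise
    ext a b
    have hcol : (A ^ d * Q) = Matrix.of fun r b => B.repr (((T h) ^ d) (q b)) r := by
      ext r b
      have : (A ^ d * Q) r b = ((A ^ d) *ᵥ fun s => Q s b) r := by
        simp [Matrix.mul_apply, Matrix.mulVec, dotProduct]
      rw [this]
      have hQcol : (fun s => Q s b) = (B.repr (q b) : Fin l' → ℝ) := by
        funext s; simp [hQ]
      rw [hQcol, hpow d]
      exact congrFun (LinearMap.toMatrix_mulVec_repr B B
        (((T h) ^ d : W M N ≃ₗ[ℝ] W M N) : (W M N) →ₗ[ℝ] (W M N)) (q b)) r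
    rw [hcol]
    have hsum : (Pᵀ * Matrix.of fun r b => B.repr (((T h) ^ d) (q b)) r) a b
        = ((((T h) ^ d) (q b) : W M N) : ℤ → Fin m → ℝ) 0 a := by
      have hrepr := B.sum_repr (((T h) ^ d) (q b))
      calc (Pᵀ * Matrix.of fun r b => B.repr (((T h) ^ d) (q b)) r) a b
          = ∑ r, B.repr (((T h) ^ d) (q b)) r * ((B r : W M N) : ℤ → Fin m → ℝ) 0 a := by
            simp [Matrix.mul_apply, hP, mul_comm]
        _ = ((((∑ r, B.repr (((T h) ^ d) (q b)) r • B r) : W M N)) : ℤ → Fin m → ℝ) 0 a := by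
            rw [Submodule.coe_sum]
            simp [Finset.sum_apply, Submodule.coe_smul, smul_eq_mul]
        _ = ((((T h) ^ d) (q b) : W M N) : ℤ → Fin m → ℝ) 0 a := by rw [hrepr]
    rw [hsum, T_zpow_apply h d (q b) 0]
    have : ((q b : W M N) : ℤ → Fin m → ℝ) (0 + d) = (M (-d))ᵀ *ᵥ (N 0 *ᵥ Pi.single b 1) := by
      simp [hq]
    rw [this, Matrix.mulVec_mulVec]
    have hMd : (M (-d))ᵀ * N 0 = (M 0)ᵀ * N d := by
      have := h (-d) 0 d
      simpa using this
    rw [hMd]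
    simp [Matrix.mulVec, Pi.single_apply, Finset.sum_ite_eq', Matrix.mul_apply]
  · rintro ⟨l', P, Q, A, hA, hrep⟩ i j k
    have key : ∀ i j : ℤ, (M i)ᵀ * N j = Pᵀ * A ^ (-i + j) * Q := by
      intro i j
      rw [hrep i j, Matrix.transpose_mul, Matrix.transpose_transpose,
        Matrix.zpow_add hA, Matrix.mul_assoc, Matrix.mul_assoc, Matrix.mul_assoc]
    rw [key i j, key (i + k) (j + k)]
    ring_nf
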